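/- arXiv:2504.03573 — 2 statements merged into one kernel-verified Lean document; each statement's English description precedes it below -/
import Mathlib

section
/- Let x_1,…,x_m ∈ ℝ be distinct points with weights w_1,…,w_m ∈ ℝ, and y_1,…,y_n ∈ ℝ be distinct points with weights v_1,…,v_n ∈ ℝ. Let ℓ^x_p denote the Lagrange basis polynomial of the nodes x_1,…,x_m associated with x_p, and ℓ^y_q the Lagrange basis polynomial of the nodes y_1,…,y_n associated with y_q. Assume both quadrature rules are exact up to degree D on [-1,1]: for every real polynomial P with deg P ≤ D, Σ_{p=1}^m w_p P(x_p) = ∫_{-1}^{1} P(t) dt = Σ_{q=1}^n v_q P(y_q). Let f and g be real polynomials with deg f < m, deg g < n, and deg f + deg g ≤ D. Then the two point-to-point-interpolated quadrature sums agree: Σ_{p=1}^m w_p f(x_p) (Σ_{q=1}^n ℓ^y_q(x_p) g(y_q)) = Σ_{q=1}^n v_q g(y_q) (Σ_{p=1}^m ℓ^x_p(y_q) f(x_p)). -/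
open Polynomial Finset

/-- If both quadrature rules are exact up to degree `D` on `[-1,1]`,
`deg f < m`, `deg g < n` and `deg f + deg g ≤ D`, then the two
point-to-point-interpolated quadrature sums agree. -/
theorem p2p_interp_quadrature_symm {m n D : ℕ}
    (x : Fin m → ℝ) (hx : Function.Injective x) (w : Fin m → ℝ)
    (y : Fin n → ℝ) (hy : Function.Injective y) (v : Fin n → ℝ)
    (hwx : ∀ P : ℝ[X], P.natDegree ≤ D →
      ∑ p, w p * P.eval (x p) = ∫ t in (-1:ℝ)..1, P.eval t)
    (hvy : ∀ P : ℝ[X], P.natDegree ≤ D →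
      ∑ q, v q * P.eval (y q) = ∫ t in (-1:ℝ)..1, P.eval t)
    (f g : ℝ[X]) (hf : f.natDegree < m) (hg : g.natDegree < n)
    (hfg : f.natDegree + g.natDegree ≤ D) :
    ∑ p, w p * f.eval (x p) *
        (∑ q, (Lagrange.basis Finset.univ y q).eval (x p) * g.eval (y q))
      = ∑ q, v q * g.eval (y q) *
        (∑ p, (Lagrange.basis Finset.univ x p).eval (y q) * f.eval (x p)) := by
  have hgn : g.degree < (Finset.univ : Finset (Fin n)).card := by
    simpa using lt_of_le_of_lt degree_le_natDegree (by exact_mod_cast hg)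
  have hfm : f.degree < (Finset.univ : Finset (Fin m)).card := by
    simpa using lt_of_le_of_lt degree_le_natDegree (by exact_mod_cast hf)
  have hginterp : ∀ t : ℝ,
      ∑ q, (Lagrange.basis Finset.univ y q).eval t * g.eval (y q) = g.eval t := by
    intro t
    conv_rhs => rw [Lagrange.eq_interpolate hy.injOn hgn]
    rw [Lagrange.interpolate_apply, eval_finset_sum]
    exact Finset.sum_congr rfl fun q _ => by rw [eval_mul, eval_C, mul_comm]
  have hfinterp : ∀ t : ℝ,
      ∑ p, (Lagrange.basis Finset.univ x p).eval t * f.eval (x p) = f.eval t := by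
    intro t
    conv_rhs => rw [Lagrange.eq_interpolate hx.injOn hfm]
    rw [Lagrange.interpolate_apply, eval_finset_sum]
    exact Finset.sum_congr rfl fun p _ => by rw [eval_mul, eval_C, mul_comm]
  have hd : (f * g).natDegree ≤ D := le_trans (natDegree_mul_le) hfg
  calc ∑ p, w p * f.eval (x p) *
        (∑ q, (Lagrange.basis Finset.univ y q).eval (x p) * g.eval (y q))
      = ∑ p, w p * (f * g).eval (x p) := by
        refine Finset.sum_congr rfl fun p _ => ?_
        rw [hginterp (x p), eval_mul]; ring
    _ = ∫ t in (-1:ℝ)..1, (f * g).eval t := hwx _ hd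
    _ = ∑ q, v q * (f * g).eval (y q) := (hvy _ hd).symm
    _ = _ := by
        refine Finset.sum_congr rfl fun q _ => ?_
        rw [hfinterp (y q), eval_mul]; ring
end

section
/- Let Q be a finite index set of unified quadrature points on a shared interface, with weights w_q ∈ ℝ, metric terms J_q ∈ ℝ, and normals n_q ∈ ℝ^d (the left element's outward normal; the right element's outward normal at the same point is -n_q). Let a_i(q) ∈ ℝ (i = 1,…,N_l) be the left basis traces, b_j(q) ∈ ℝ (j = 1,…,N_r) the right basis traces, and g^l_i(q), g^r_j(q) ∈ ℝ^d the corresponding gradient traces, and let τ ∈ ℝ. Define, via the quadrature sums Σ_{q∈Q} w_q J_q (…): M_A(i,j) = Σ w_q J_q a_i (n_q·g^l_j), M'_A(i,j) = Σ w_q J_q (g^l_i·n_q) a_j, M_E(i,j) = 2τ Σ w_q J_q a_i a_j (all N_l×N_l); M_B(i,j) = Σ w_q J_q b_i ((-n_q)·g^r_j), M'_B(i,j) = Σ w_q J_q (g^r_i·(-n_q)) b_j, M_F(i,j) = 2τ Σ w_q J_q b_i b_j (all N_r×N_r); M_C(i,j) = Σ w_q J_q a_i (n_q·g^r_j), M'_D(i,j)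 = Σ w_q J_q (g^l_i·n_q) b_j, M_G(i,j) = 2τ Σ w_q J_q a_i b_j (all N_l×N_r); M'_C(i,j) = Σ w_q J_q (g^r_i·(-n_q)) a_j, M_D(i,j) = Σ w_q J_q b_i ((-n_q)·g^l_j), M'_G(i,j) = 2τ Σ w_q J_q b_i a_j (all N_r×N_l). Then the assembled SIPG face block matrix, with upper-left block -M_A - M'_A + M_E, upper-right block -M_C + M'_D - M_G, lower-left block M'_C - M_D - M'_G, and lower-right block -M_B - M'_B + M_F, is symmetric. -/
open Matrix RealInnerProductSpace

section Aux
variable {d : ℕ} {Q : Type*} [Fintype Q]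

private lemma sumL1 (w J f : Q → ℝ) (u v : Q → EuclideanSpace ℝ (Fin d)) :
    ∑ q, w q * J q * (f q * ⟪u q, v q⟫) = ∑ q, w q * J q * (⟪v q, u q⟫ * f q) :=
  Finset.sum_congr rfl fun q _ => by rw [real_inner_comm]; ring

private lemma sumL2 (w J f g : Q → ℝ) :
    ∑ q, w q * J q * (f q * g q) = ∑ q, w q * J q * (g q * f q) :=
  Finset.sum_congr rfl fun q _ => by ring

end Aux

/-- evaluating all SIPG interface-flux inner products with a single
unified quadrature rule on the shared trace yields a symmetric face block matrix,
regardless of the (possibly non-conforming) bases on the two sides. -/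
theorem sipg_unified_quadrature_block_symm {d Nl Nr : ℕ} {Q : Type*} [Fintype Q]
    (w J : Q → ℝ) (n : Q → EuclideanSpace ℝ (Fin d))
    (a : Fin Nl → Q → ℝ) (b : Fin Nr → Q → ℝ)
    (gl : Fin Nl → Q → EuclideanSpace ℝ (Fin d))
    (gr : Fin Nr → Q → EuclideanSpace ℝ (Fin d))
    (τ : ℝ) :
    fromBlocks
      (-(Matrix.of fun (i j : Fin Nl) => ∑ q, w q * J q * (a i q * ⟪n q, gl j q⟫))
        - (Matrix.of fun (i j : Fin Nl) => ∑ q, w q * J q * (⟪gl i q, n q⟫ * a j q))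
        + (Matrix.of fun (i j : Fin Nl) => 2 * τ * ∑ q, w q * J q * (a i q * a j q)))
      (-(Matrix.of fun (i : Fin Nl) (j : Fin Nr) => ∑ q, w q * J q * (a i q * ⟪n q, gr j q⟫))
        + (Matrix.of fun (i : Fin Nl) (j : Fin Nr) => ∑ q, w q * J q * (⟪gl i q, n q⟫ * b j q))
        - (Matrix.of fun (i : Fin Nl) (j : Fin Nr) => 2 * τ * ∑ q, w q * J q * (a i q * b j q)))
      ((Matrix.of fun (i : Fin Nr) (j : Fin Nl) => ∑ q, w q * J q * (⟪gr i q, -n q⟫ * a j q))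
        - (Matrix.of fun (i : Fin Nr) (j : Fin Nl) => ∑ q, w q * J q * (b i q * ⟪-n q, gl j q⟫))
        - (Matrix.of fun (i : Fin Nr) (j : Fin Nl) => 2 * τ * ∑ q, w q * J q * (b i q * a j q)))
      (-(Matrix.of fun (i j : Fin Nr) => ∑ q, w q * J q * (b i q * ⟪-n q, gr j q⟫))
        - (Matrix.of fun (i j : Fin Nr) => ∑ q, w q * J q * (⟪gr i q, -n q⟫ * b j q))
        + (Matrix.of fun (i j : Fin Nr) => 2 * τ * ∑ q, w q * J q * (b i q * b j q)))
    = (fromBlocks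
      (-(Matrix.of fun (i j : Fin Nl) => ∑ q, w q * J q * (a i q * ⟪n q, gl j q⟫))
        - (Matrix.of fun (i j : Fin Nl) => ∑ q, w q * J q * (⟪gl i q, n q⟫ * a j q))
        + (Matrix.of fun (i j : Fin Nl) => 2 * τ * ∑ q, w q * J q * (a i q * a j q)))
      (-(Matrix.of fun (i : Fin Nl) (j : Fin Nr) => ∑ q, w q * J q * (a i q * ⟪n q, gr j q⟫))
        + (Matrix.of fun (i : Fin Nl) (j : Fin Nr) => ∑ q, w q * J q * (⟪gl i q, n q⟫ * b j q))
        - (Matrix.of fun (i : Fin Nl) (j : Fin Nr) => 2 * τ * ∑ q, w q * J q * (a i q * b j q)))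
      ((Matrix.of fun (i : Fin Nr) (j : Fin Nl) => ∑ q, w q * J q * (⟪gr i q, -n q⟫ * a j q))
        - (Matrix.of fun (i : Fin Nr) (j : Fin Nl) => ∑ q, w q * J q * (b i q * ⟪-n q, gl j q⟫))
        - (Matrix.of fun (i : Fin Nr) (j : Fin Nl) => 2 * τ * ∑ q, w q * J q * (b i q * a j q)))
      (-(Matrix.of fun (i j : Fin Nr) => ∑ q, w q * J q * (b i q * ⟪-n q, gr j q⟫))
        - (Matrix.of fun (i j : Fin Nr) => ∑ q, w q * J q * (⟪gr i q, -n q⟫ * b j q))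
        + (Matrix.of fun (i j : Fin Nr) => 2 * τ * ∑ q, w q * J q * (b i q * b j q))))ᵀ := by
  rw [fromBlocks_transpose, fromBlocks_inj]
  refine ⟨?_, ?_, ?_, ?_⟩
  · ext i j
    simp only [transpose_apply, Matrix.sub_apply, Matrix.add_apply, Matrix.neg_apply,
      Matrix.of_apply]
    rw [sumL1 w J (a i) n (gl j), sumL1 w J (a j) n (gl i), sumL2 w J (a i) (a j)]
    ring
  · ext i j
    simp only [transpose_apply, Matrix.sub_apply, Matrix.add_apply, Matrix.neg_apply,
      Matrix.of_apply, inner_neg_left, inner_neg_right, mul_neg, neg_mul,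
      Finset.sum_neg_distrib]
    rw [sumL1 w J (a i) n (gr j), sumL1 w J (b j) n (gl i), sumL2 w J (a i) (b j)]
    ring
  · ext i j
    simp only [transpose_apply, Matrix.sub_apply, Matrix.add_apply, Matrix.neg_apply,
      Matrix.of_apply, inner_neg_left, inner_neg_right, mul_neg, neg_mul,
      Finset.sum_neg_distrib]
    rw [sumL1 w J (b i) n (gl j), sumL1 w J (a j) n (gr i), sumL2 w J (b i) (a j)]
    ring
  · ext i j
    simp only [transpose_apply, Matrix.sub_apply, Matrix.add_apply, Matrix.neg_apply,
      Matrix.of_apply, inner_neg_left, inner_neg_right, mul_neg, neg_mul,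
      Finset.sum_neg_distrib]
    rw [sumL1 w J (b i) n (gr j), sumL1 w J (b j) n (gr i), sumL2 w J (b i) (b j)]
    ring
end
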